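/- Assume V₀ < d₀²/4. Then for every real number r with r_min ≤ r < r_max there exists exactly one bounded operator X on H such that ‖X‖ ≤ r, the spectrum of A + X is disjoint from Γ (so that V(A+X) is defined), and X = V(A + X). Moreover this solution X (the same for all admissible r) satisfies ‖X‖ ≤ r_min. -/

import Mathlib

open MeasureTheory Metric Set

noncomputable section

section AuxRing

variable {R : Type*} [NormedRing R] [CompleteSpace R]

lemma aux_pow_norm_le (h1 : ‖(1:R)‖ ≤ 1) (t : R) : ∀ i : ℕ, ‖t ^ i‖ ≤ ‖t‖ ^ i := by
  intro i
  cases i with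
  | zero => simpa using h1
  | succ n => exact norm_pow_le' t n.succ_pos

lemma aux_norm_inverse_one_sub_le (h1 : ‖(1:R)‖ ≤ 1) {t : R} (h : ‖t‖ < 1) :
    ‖Ring.inverse (1 - t)‖ ≤ (1 - ‖t‖)⁻¹ := by
  have hsum : Summable fun i : ℕ => ‖t‖ ^ i := summable_geometric_of_lt_one (norm_nonneg t) h
  have hsum' : Summable fun i : ℕ => ‖t ^ i‖ :=
    hsum.of_nonneg_of_le (fun i => norm_nonneg _) (aux_pow_norm_le h1 t)
  calc ‖Ring.inverse (1 - t)‖ = ‖∑' i : ℕ, t ^ i‖ := by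
        rw [geom_series_eq_inverse t h]
    _ ≤ ∑' i : ℕ, ‖t ^ i‖ := norm_tsum_le_tsum_norm hsum'
    _ ≤ ∑' i : ℕ, ‖t‖ ^ i := Summable.tsum_le_tsum (aux_pow_norm_le h1 t) hsum' hsum
    _ = (1 - ‖t‖)⁻¹ := tsum_geometric_of_lt_one (norm_nonneg t) h

/-- Perturbation of a unit, with quantitative norm bound on the inverse. -/
lemma aux_inverse_add_bound (h1 : ‖(1:R)‖ ≤ 1) {B X : R} (hB : IsUnit B) {d r : ℝ}
    (hd : 0 < d) (hinv : ‖Ring.inverse B‖ ≤ d⁻¹) (hX : ‖X‖ ≤ r) (hr : r < d) :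
    IsUnit (B + X) ∧ ‖Ring.inverse (B + X)‖ ≤ (d - r)⁻¹ := by
  set C := Ring.inverse B with hC
  have hr0 : 0 ≤ r := le_trans (norm_nonneg X) hX
  have hnt : ‖-(C * X)‖ ≤ d⁻¹ * r := by
    rw [norm_neg]
    calc ‖C * X‖ ≤ ‖C‖ * ‖X‖ := norm_mul_le _ _
      _ ≤ d⁻¹ * r := mul_le_mul hinv hX (norm_nonneg X) (by positivity)
  have hlt1 : d⁻¹ * r < 1 := by rw [inv_mul_lt_iff₀ hd]; nlinarith
  have ht : ‖-(C * X)‖ < 1 := lt_of_le_of_lt hnt hlt1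
  have hBC : B * C = 1 := Ring.mul_inverse_cancel B hB
  have hfac : B + X = B * (1 - -(C * X)) := by
    rw [sub_neg_eq_add, mul_add, mul_one, ← mul_assoc, hBC, one_mul]
  have hu2 : IsUnit (1 - -(C * X)) := isUnit_one_sub_of_norm_lt_one ht
  have hunit : IsUnit (B + X) := hfac ▸ hB.mul hu2
  refine ⟨hunit, ?_⟩
  set t := -(C * X) with htdef
  have hinv_eq : Ring.inverse (B + X) = Ring.inverse (1 - t) * C := by
    have hmul : (B + X) * (Ring.inverse (1 - t) * C) = 1 := by
      rw [hfac, mul_assoc, ← mul_assoc (1 - t), Ring.mul_inverse_cancel _ hu2, one_mul, hBC]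
    calc Ring.inverse (B + X)
        = Ring.inverse (B + X) * ((B + X) * (Ring.inverse (1 - t) * C)) := by
          rw [hmul, mul_one]
      _ = (Ring.inverse (B + X) * (B + X)) * (Ring.inverse (1 - t) * C) := by rw [mul_assoc]
      _ = Ring.inverse (1 - t) * C := by rw [Ring.inverse_mul_cancel _ hunit, one_mul]
  rw [hinv_eq]
  have h1t : ‖Ring.inverse (1 - t)‖ ≤ (1 - d⁻¹ * r)⁻¹ := by
    refine (aux_norm_inverse_one_sub_le h1 ht).trans ?_
    apply inv_anti₀
    · linarith
    · linarith [hnt]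
  calc ‖Ring.inverse (1 - t) * C‖ ≤ ‖Ring.inverse (1 - t)‖ * ‖C‖ := norm_mul_le _ _
    _ ≤ (1 - d⁻¹ * r)⁻¹ * d⁻¹ := by
        apply mul_le_mul h1t hinv (norm_nonneg _)
        have : (0:ℝ) < 1 - d⁻¹ * r := by linarith
        positivity
    _ = (d - r)⁻¹ := by
        rw [← mul_inv]
        congr 1
        field_simp

end AuxRing

lemma aux_ring_inverse_eq {M₀ : Type*} [MonoidWithZero M₀] {a b : M₀}
    (h1 : a * b = 1) (h2 : b * a = 1) : Ring.inverse a = b := by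
  have : Ring.inverse ((⟨a, b, h1, h2⟩ : M₀ˣ) : M₀) = b := by
    rw [Ring.inverse_unit]; rfl
  exact this

lemma aux_inverse_sub_inverse {R : Type*} [Ring R] {a b : R} (ha : IsUnit a) (hb : IsUnit b) :
    Ring.inverse a - Ring.inverse b = Ring.inverse a * (b - a) * Ring.inverse b := by
  rw [mul_sub, sub_mul, mul_assoc, Ring.mul_inverse_cancel b hb, mul_one,
    Ring.inverse_mul_cancel a ha, one_mul]

variable {H : Type*} [NormedAddCommGroup H] [InnerProductSpace ℂ H] [CompleteSpace H]

lemma aux_resolvent_cfc (A : H →L[ℂ] H) (hA : IsSelfAdjoint A) {z : ℂ}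
    (hz : z ∉ spectrum ℂ A) :
    Ring.inverse (A - z • (1 : H →L[ℂ] H)) = cfc (fun w : ℂ => (w - z)⁻¹) A := by
  have hN : IsStarNormal A := hA.isStarNormal
  have hzs : ∀ w ∈ spectrum ℂ A, w - z ≠ 0 := by
    intro w hw h0
    exact hz (by rw [sub_eq_zero] at h0; rwa [h0] at hw)
  have hf : ContinuousOn (fun w : ℂ => (w - z)⁻¹) (spectrum ℂ A) :=
    ContinuousOn.inv₀ (by fun_prop) hzs
  have hg : ContinuousOn (fun w : ℂ => w - z) (spectrum ℂ A) := by fun_prop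
  have hcg : cfc (fun w : ℂ => w - z) A = A - z • (1 : H →L[ℂ] H) := by
    rw [cfc_sub _ _ A (by fun_prop) (by fun_prop), cfc_id' ℂ A, cfc_const z A,
      Algebra.algebraMap_eq_smul_one]
  have h1 : (A - z • (1 : H →L[ℂ] H)) * cfc (fun w : ℂ => (w - z)⁻¹) A = 1 := by
    rw [← hcg, ← cfc_mul _ _ A hg hf]
    calc cfc (fun w : ℂ => (w - z) * (w - z)⁻¹) A = cfc (fun _ : ℂ => (1:ℂ)) A :=
          cfc_congr (fun w hw => mul_inv_cancel₀ (hzs w hw))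
      _ = 1 := by rw [cfc_const 1 A, map_one]
  have h2 : cfc (fun w : ℂ => (w - z)⁻¹) A * (A - z • (1 : H →L[ℂ] H)) = 1 := by
    rw [← hcg, ← cfc_mul _ _ A hf hg]
    calc cfc (fun w : ℂ => (w - z)⁻¹ * (w - z)) A = cfc (fun _ : ℂ => (1:ℂ)) A :=
          cfc_congr (fun w hw => inv_mul_cancel₀ (hzs w hw))
      _ = 1 := by rw [cfc_const 1 A, map_one]
  exact aux_ring_inverse_eq h1 h2

lemma aux_norm_resolvent_le (A : H →L[ℂ] H) (hA : IsSelfAdjoint A) {z : ℂ}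
    (hz : z ∉ spectrum ℂ A) {d : ℝ} (hd : 0 < d)
    (hdist : ∀ μ ∈ spectrum ℂ A, d ≤ dist z μ) :
    ‖Ring.inverse (A - z • (1 : H →L[ℂ] H))‖ ≤ d⁻¹ := by
  have hN : IsStarNormal A := hA.isStarNormal
  rw [aux_resolvent_cfc A hA hz]
  refine norm_cfc_le (by positivity) (fun w hw => ?_)
  rw [norm_inv]
  have : d ≤ ‖w - z‖ := by
    rw [← dist_eq_norm, dist_comm]
    exact hdist w hw
  exact inv_anti₀ hd this

lemma aux_isUnit_sub_smul_one (A : H →L[ℂ] H) {z : ℂ} (hz : z ∉ spectrum ℂ A) :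
    IsUnit (A - z • (1 : H →L[ℂ] H)) := by
  rw [spectrum.notMem_iff] at hz
  have := hz.neg
  rwa [Algebra.algebraMap_eq_smul_one, neg_sub] at this

/-- `d₀ = inf_{t ∈ [0,1]} dist (γ t, σ(A))`. -/
noncomputable def curveDist (A : H →L[ℂ] H) (γ : ℝ → ℂ) : ℝ :=
  ⨅ t : Set.Icc (0 : ℝ) 1, Metric.infDist (γ t) (spectrum ℂ A)

/-- `V₀ = ∫₀¹ |γ'(t)| ‖K(γ(t))‖ dt`. -/
noncomputable def curveVar (K : ℂ → H →L[ℂ] H) (γ : ℝ → ℂ) : ℝ :=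
  ∫ t in (0:ℝ)..1, ‖derivWithin γ (Set.Icc 0 1) t‖ * ‖K (γ t)‖

/-- `V(Y) = ∫₀¹ γ'(t) • K(γ(t)) ∘ (Y − γ(t))⁻¹ dt` (Bochner integral in `B(H)`). -/
noncomputable def Vmap (K : ℂ → H →L[ℂ] H) (γ : ℝ → ℂ) (Y : H →L[ℂ] H) : H →L[ℂ] H :=
  ∫ t in (0:ℝ)..1, derivWithin γ (Set.Icc 0 1) t •
    (K (γ t) ∘L Ring.inverse (Y - γ t • (1 : H →L[ℂ] H)))

/-- `r_min = d₀/2 − √(d₀²/4 − V₀)`. -/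
noncomputable def rMin (A : H →L[ℂ] H) (K : ℂ → H →L[ℂ] H) (γ : ℝ → ℂ) : ℝ :=
  curveDist A γ / 2 - Real.sqrt ((curveDist A γ) ^ 2 / 4 - curveVar K γ)

/-- `r_max = d₀ − √V₀`. -/
noncomputable def rMax (A : H →L[ℂ] H) (K : ℂ → H →L[ℂ] H) (γ : ℝ → ℂ) : ℝ :=
  curveDist A γ - Real.sqrt (curveVar K γ)

lemma aux_key_bound (A : H →L[ℂ] H) (hA : IsSelfAdjoint A) (γ : ℝ → ℂ)
    (hΓ : ∀ t ∈ Set.Icc (0:ℝ) 1, γ t ∉ spectrum ℂ A)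
    (hd : 0 < curveDist A γ) {X : H →L[ℂ] H} {r : ℝ} (hX : ‖X‖ ≤ r)
    (hr : r < curveDist A γ) {t : ℝ} (ht : t ∈ Set.Icc (0:ℝ) 1) :
    IsUnit (A + X - γ t • (1 : H →L[ℂ] H)) ∧
      ‖Ring.inverse (A + X - γ t • (1 : H →L[ℂ] H))‖ ≤ (curveDist A γ - r)⁻¹ := by
  have hzt := hΓ t ht
  have hB : IsUnit (A - γ t • (1 : H →L[ℂ] H)) := aux_isUnit_sub_smul_one A hzt
  have hdd : ∀ μ ∈ spectrum ℂ A, curveDist A γ ≤ dist (γ t) μ := by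
    intro μ hμ
    have hbdd : BddBelow (Set.range fun u : Set.Icc (0:ℝ) 1 =>
        Metric.infDist (γ u) (spectrum ℂ A)) := by
      refine ⟨0, ?_⟩
      rintro x ⟨u, rfl⟩
      exact Metric.infDist_nonneg
    have h1 : curveDist A γ ≤ Metric.infDist (γ t) (spectrum ℂ A) :=
      ciInf_le hbdd (⟨t, ht⟩ : Set.Icc (0:ℝ) 1)
    exact h1.trans (Metric.infDist_le_dist_of_mem hμ)
  have hBinv := aux_norm_resolvent_le A hA hzt hd hdd
  have h1 : ‖(1 : H →L[ℂ] H)‖ ≤ 1 := by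
    rw [ContinuousLinearMap.one_def]; exact ContinuousLinearMap.norm_id_le
  have hres := aux_inverse_add_bound h1 hB hd hBinv hX hr
  have heq : (A - γ t • (1 : H →L[ℂ] H)) + X = A + X - γ t • (1 : H →L[ℂ] H) := by abel
  rwa [heq] at hres

lemma aux_integrand_contOn (A : H →L[ℂ] H) (γ : ℝ → ℂ)
    (hγ : ContDiffOn ℝ 1 γ (Set.Icc 0 1)) (K : ℂ → H →L[ℂ] H)
    (hK : ContinuousOn (fun t => K (γ t)) (Set.Icc 0 1)) (X : H →L[ℂ] H)
    (hunit : ∀ t ∈ Set.Icc (0:ℝ) 1, IsUnit (A + X - γ t • (1 : H →L[ℂ] H))) :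
    ContinuousOn (fun t => derivWithin γ (Set.Icc 0 1) t •
      (K (γ t) ∘L Ring.inverse (A + X - γ t • (1 : H →L[ℂ] H)))) (Set.Icc 0 1) := by
  have hc1 : ContinuousOn (derivWithin γ (Set.Icc 0 1)) (Set.Icc 0 1) :=
    hγ.continuousOn_derivWithin (uniqueDiffOn_Icc one_pos) le_rfl
  have hγc : ContinuousOn γ (Set.Icc 0 1) := hγ.continuousOn
  have hop : ContinuousOn (fun t => A + X - γ t • (1 : H →L[ℂ] H)) (Set.Icc 0 1) :=
    continuousOn_const.sub (hγc.smul continuousOn_const)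
  have hinv : ContinuousOn (fun t => Ring.inverse (A + X - γ t • (1 : H →L[ℂ] H)))
      (Set.Icc 0 1) := by
    intro t ht
    have hca : ContinuousAt Ring.inverse (A + X - γ t • (1 : H →L[ℂ] H)) := by
      have h := NormedRing.inverse_continuousAt (hunit t ht).unit
      rwa [IsUnit.unit_spec] at h
    simpa [Function.comp_def] using
      hca.comp_continuousWithinAt (f := fun u => A + X - γ u • (1 : H →L[ℂ] H)) (hop t ht)
  exact hc1.smul (hK.clm_comp hinv)

lemma aux_curveVar_nonneg (K : ℂ → H →L[ℂ] H) (γ : ℝ → ℂ) : 0 ≤ curveVar K γ := by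
  apply intervalIntegral.integral_nonneg zero_le_one
  intro u _
  positivity

lemma aux_Vmap_bound (A : H →L[ℂ] H) (hA : IsSelfAdjoint A) (γ : ℝ → ℂ)
    (hγ : ContDiffOn ℝ 1 γ (Set.Icc 0 1))
    (hΓ : ∀ t ∈ Set.Icc (0:ℝ) 1, γ t ∉ spectrum ℂ A)
    (K : ℂ → H →L[ℂ] H) (hK : ContinuousOn (fun t => K (γ t)) (Set.Icc 0 1))
    (hd : 0 < curveDist A γ) {X : H →L[ℂ] H} {r : ℝ} (hX : ‖X‖ ≤ r)
    (hr : r < curveDist A γ) :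
    ‖Vmap K γ (A + X)‖ ≤ curveVar K γ * (curveDist A γ - r)⁻¹ := by
  set c := (curveDist A γ - r)⁻¹ with hc
  have hc0 : 0 ≤ c := inv_nonneg.mpr (by linarith)
  have hkey := fun t (ht : t ∈ Set.Icc (0:ℝ) 1) => aux_key_bound A hA γ hΓ hd hX hr ht
  have hc1 : ContinuousOn (derivWithin γ (Set.Icc 0 1)) (Set.Icc 0 1) :=
    hγ.continuousOn_derivWithin (uniqueDiffOn_Icc one_pos) le_rfl
  have hgc : ContinuousOn (fun t => ‖derivWithin γ (Set.Icc 0 1) t‖ * ‖K (γ t)‖ * c)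
      (Set.Icc 0 1) := (hc1.norm.mul hK.norm).mul continuousOn_const
  have hgint : IntervalIntegrable (fun t => ‖derivWithin γ (Set.Icc 0 1) t‖ * ‖K (γ t)‖ * c)
      volume 0 1 := hgc.intervalIntegrable_of_Icc zero_le_one
  have hbound := intervalIntegral.norm_integral_le_of_norm_le (μ := volume) (a := 0) (b := 1)
    (f := fun t => derivWithin γ (Set.Icc 0 1) t •
      (K (γ t) ∘L Ring.inverse (A + X - γ t • (1 : H →L[ℂ] H))))
    (g := fun t => ‖derivWithin γ (Set.Icc 0 1) t‖ * ‖K (γ t)‖ * c) zero_le_one ?_ hgint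
  · refine le_trans hbound ?_
    have : ∫ t in (0:ℝ)..1, ‖derivWithin γ (Set.Icc 0 1) t‖ * ‖K (γ t)‖ * c =
        curveVar K γ * c := intervalIntegral.integral_mul_const c _
    rw [this]
  · refine Filter.Eventually.of_forall (fun t ht => ?_)
    have ht' : t ∈ Set.Icc (0:ℝ) 1 := by
      exact Set.Ioc_subset_Icc_self ht
    show _ ≤ ‖derivWithin γ (Set.Icc 0 1) t‖ * ‖K (γ t)‖ * c
    rw [norm_smul, mul_assoc]
    apply mul_le_mul_of_nonneg_left _ (norm_nonneg _)
    calc ‖K (γ t) ∘L Ring.inverse (A + X - γ t • (1 : H →L[ℂ] H))‖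
        ≤ ‖K (γ t)‖ * ‖Ring.inverse (A + X - γ t • (1 : H →L[ℂ] H))‖ :=
          ContinuousLinearMap.opNorm_comp_le _ _
      _ ≤ ‖K (γ t)‖ * c := mul_le_mul_of_nonneg_left (hkey t ht').2 (norm_nonneg _)

lemma aux_Vmap_lip (A : H →L[ℂ] H) (hA : IsSelfAdjoint A) (γ : ℝ → ℂ)
    (hγ : ContDiffOn ℝ 1 γ (Set.Icc 0 1))
    (hΓ : ∀ t ∈ Set.Icc (0:ℝ) 1, γ t ∉ spectrum ℂ A)
    (K : ℂ → H →L[ℂ] H) (hK : ContinuousOn (fun t => K (γ t)) (Set.Icc 0 1))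
    (hd : 0 < curveDist A γ) {X Y : H →L[ℂ] H} {r : ℝ} (hX : ‖X‖ ≤ r) (hY : ‖Y‖ ≤ r)
    (hr : r < curveDist A γ) :
    ‖Vmap K γ (A + X) - Vmap K γ (A + Y)‖ ≤
      curveVar K γ * ((curveDist A γ - r)⁻¹) ^ 2 * ‖X - Y‖ := by
  set c := (curveDist A γ - r)⁻¹ with hc
  have hc0 : 0 ≤ c := inv_nonneg.mpr (by linarith)
  have hkeyX := fun t (ht : t ∈ Set.Icc (0:ℝ) 1) => aux_key_bound A hA γ hΓ hd hX hr ht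
  have hkeyY := fun t (ht : t ∈ Set.Icc (0:ℝ) 1) => aux_key_bound A hA γ hΓ hd hY hr ht
  have hFc := aux_integrand_contOn A γ hγ K hK X (fun t ht => (hkeyX t ht).1)
  have hGc := aux_integrand_contOn A γ hγ K hK Y (fun t ht => (hkeyY t ht).1)
  have hFint : IntervalIntegrable _ volume 0 1 := hFc.intervalIntegrable_of_Icc zero_le_one
  have hGint : IntervalIntegrable _ volume 0 1 := hGc.intervalIntegrable_of_Icc zero_le_one
  have hsub : Vmap K γ (A + X) - Vmap K γ (A + Y) =
      ∫ t in (0:ℝ)..1,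
        (derivWithin γ (Set.Icc 0 1) t •
          (K (γ t) ∘L Ring.inverse (A + X - γ t • (1 : H →L[ℂ] H))) -
         derivWithin γ (Set.Icc 0 1) t •
          (K (γ t) ∘L Ring.inverse (A + Y - γ t • (1 : H →L[ℂ] H)))) :=
    (intervalIntegral.integral_sub hFint hGint).symm
  rw [hsub]
  have hc1 : ContinuousOn (derivWithin γ (Set.Icc 0 1)) (Set.Icc 0 1) :=
    hγ.continuousOn_derivWithin (uniqueDiffOn_Icc one_pos) le_rfl
  have hgc : ContinuousOn
      (fun t => ‖derivWithin γ (Set.Icc 0 1) t‖ * ‖K (γ t)‖ * (c ^ 2 * ‖X - Y‖))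
      (Set.Icc 0 1) := (hc1.norm.mul hK.norm).mul continuousOn_const
  have hgint : IntervalIntegrable _ volume 0 1 := hgc.intervalIntegrable_of_Icc zero_le_one
  refine le_trans (intervalIntegral.norm_integral_le_of_norm_le zero_le_one ?_ hgint) ?_
  · refine Filter.Eventually.of_forall (fun t ht => ?_)
    have ht' : t ∈ Set.Icc (0:ℝ) 1 := by
      exact Set.Ioc_subset_Icc_self ht
    set u := A + X - γ t • (1 : H →L[ℂ] H) with hu
    set v := A + Y - γ t • (1 : H →L[ℂ] H) with hv
    have hdiff : Ring.inverse u - Ring.inverse v =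
        Ring.inverse u * (Y - X) * Ring.inverse v := by
      have hvu : v - u = Y - X := by rw [hu, hv]; abel
      rw [aux_inverse_sub_inverse (hkeyX t ht').1 (hkeyY t ht').1, hvu]
    have hM : ‖Ring.inverse u - Ring.inverse v‖ ≤ c * ‖X - Y‖ * c := by
      rw [hdiff]
      calc ‖Ring.inverse u * (Y - X) * Ring.inverse v‖
          ≤ ‖Ring.inverse u * (Y - X)‖ * ‖Ring.inverse v‖ := norm_mul_le _ _
        _ ≤ ‖Ring.inverse u‖ * ‖Y - X‖ * ‖Ring.inverse v‖ :=
            mul_le_mul_of_nonneg_right (norm_mul_le _ _) (norm_nonneg _)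
        _ ≤ c * ‖X - Y‖ * c := by
            rw [norm_sub_rev Y X]
            exact mul_le_mul (mul_le_mul (hkeyX t ht').2 le_rfl (norm_nonneg _) hc0)
              (hkeyY t ht').2 (norm_nonneg _) (mul_nonneg hc0 (norm_nonneg _))
    calc ‖derivWithin γ (Set.Icc 0 1) t • (K (γ t) ∘L Ring.inverse u) -
          derivWithin γ (Set.Icc 0 1) t • (K (γ t) ∘L Ring.inverse v)‖
        = ‖derivWithin γ (Set.Icc 0 1) t‖ *
            ‖K (γ t) ∘L (Ring.inverse u - Ring.inverse v)‖ := by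
          rw [← smul_sub, ← ContinuousLinearMap.comp_sub, norm_smul]
      _ ≤ ‖derivWithin γ (Set.Icc 0 1) t‖ * (‖K (γ t)‖ * (c * ‖X - Y‖ * c)) := by
          apply mul_le_mul_of_nonneg_left _ (norm_nonneg _)
          exact le_trans (ContinuousLinearMap.opNorm_comp_le _ _)
            (mul_le_mul_of_nonneg_left hM (norm_nonneg _))
      _ = ‖derivWithin γ (Set.Icc 0 1) t‖ * ‖K (γ t)‖ * (c ^ 2 * ‖X - Y‖) := by ring
  · have : ∫ t in (0:ℝ)..1,
        ‖derivWithin γ (Set.Icc 0 1) t‖ * ‖K (γ t)‖ * (c ^ 2 * ‖X - Y‖) =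
        curveVar K γ * (c ^ 2 * ‖X - Y‖) := intervalIntegral.integral_mul_const _ _
    rw [this, ← mul_assoc]
set_option maxHeartbeats 1600000 in
/-- solvability of the basic equation `X = V(A + X)`. -/
theorem statement0 (A : H →L[ℂ] H) (hA : IsSelfAdjoint A)
    (γ : ℝ → ℂ) (hγ : ContDiffOn ℝ 1 γ (Set.Icc 0 1))
    (hΓ : ∀ t ∈ Set.Icc (0:ℝ) 1, γ t ∉ spectrum ℂ A)
    (K : ℂ → H →L[ℂ] H) (hK : ContinuousOn (fun t => K (γ t)) (Set.Icc 0 1))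
    (hV : curveVar K γ < (curveDist A γ) ^ 2 / 4) :
    ∃ X : H →L[ℂ] H,
      (‖X‖ ≤ rMin A K γ ∧
        Disjoint (spectrum ℂ (A + X)) (γ '' Set.Icc (0:ℝ) 1) ∧
        X = Vmap K γ (A + X)) ∧
      ∀ r : ℝ, rMin A K γ ≤ r → r < rMax A K γ →
        ∀ Y : H →L[ℂ] H, ‖Y‖ ≤ r →
          Disjoint (spectrum ℂ (A + Y)) (γ '' Set.Icc (0:ℝ) 1) →
          Y = Vmap K γ (A + Y) → Y = X := by
  classical
  have hV0 : 0 ≤ curveVar K γ := aux_curveVar_nonneg K γ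
  set d := curveDist A γ with hd_def
  set V := curveVar K γ with hV_def
  have hd0 : 0 ≤ d := Real.iInf_nonneg (fun t => Metric.infDist_nonneg)
  have hd : 0 < d := by nlinarith
  set s := Real.sqrt (d ^ 2 / 4 - V) with hs_def
  have hs0 : 0 ≤ s := Real.sqrt_nonneg _
  have hs2 : s ^ 2 = d ^ 2 / 4 - V := Real.sq_sqrt (by linarith)
  have hsd : s ≤ d / 2 := by nlinarith
  set rm := d / 2 - s with hrm
  have hrmin_eq : rMin A K γ = rm := by
    rw [rMin, ← hd_def, ← hV_def, ← hs_def, hrm]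
  have hrm0 : 0 ≤ rm := by rw [hrm]; linarith
  have hrmd : rm < d := by rw [hrm]; nlinarith
  have hVrm : V = rm * (d - rm) := by rw [hrm]; nlinarith
  have hdrm : 0 < d - rm := by linarith
  have hVfix : V * (d - rm)⁻¹ = rm := by
    rw [hVrm, mul_assoc, mul_inv_cancel₀ (ne_of_gt hdrm), mul_one]
  have hq1 : V * ((d - rm)⁻¹) ^ 2 < 1 := by
    have h1 : V < (d - rm) ^ 2 := by rw [hrm]; nlinarith
    calc V * ((d - rm)⁻¹) ^ 2 < (d - rm) ^ 2 * ((d - rm)⁻¹) ^ 2 :=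
          mul_lt_mul_of_pos_right h1 (by positivity)
      _ = 1 := by field_simp
  set S := Metric.closedBall (0 : H →L[ℂ] H) rm with hS
  haveI : CompleteSpace S := Metric.isClosed_closedBall.isComplete.completeSpace_coe
  haveI : Nonempty S := ⟨⟨0, Metric.mem_closedBall_self hrm0⟩⟩
  have hmaps : ∀ Z : H →L[ℂ] H, ‖Z‖ ≤ rm → ‖Vmap K γ (A + Z)‖ ≤ rm := by
    intro Z hZ
    have hb := aux_Vmap_bound A hA γ hγ hΓ K hK hd hZ hrmd
    rw [← hV_def, ← hd_def, hVfix] at hb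
    exact hb
  set f : S → S := fun Z =>
    ⟨Vmap K γ (A + (Z : H →L[ℂ] H)),
      mem_closedBall_zero_iff.mpr (hmaps Z (mem_closedBall_zero_iff.mp Z.2))⟩ with hf_def
  set q : NNReal := ⟨V * ((d - rm)⁻¹) ^ 2, by positivity⟩ with hq_def
  have hcontr : ContractingWith q f := by
    constructor
    · exact_mod_cast hq1
    · apply LipschitzWith.of_dist_le_mul
      intro Z W
      rw [Subtype.dist_eq, Subtype.dist_eq, dist_eq_norm, dist_eq_norm]
      have hl := aux_Vmap_lip A hA γ hγ hΓ K hK hd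
        (mem_closedBall_zero_iff.mp Z.2) (mem_closedBall_zero_iff.mp W.2) hrmd
      rw [← hV_def, ← hd_def] at hl
      exact hl
  obtain ⟨Xp, hfix⟩ : ∃ x : S, f x = x := ⟨_, hcontr.fixedPoint_isFixedPt⟩
  obtain ⟨X, hXmem⟩ := Xp
  have hXrm' : X ∈ S := hXmem
  have hXrm : ‖X‖ ≤ rm := mem_closedBall_zero_iff.mp hXrm'
  have hXeq : X = Vmap K γ (A + X) := (congrArg Subtype.val hfix).symm
  have hdisj : ∀ (Z : H →L[ℂ] H) (rz : ℝ), ‖Z‖ ≤ rz → rz < d →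
      Disjoint (spectrum ℂ (A + Z)) (γ '' Set.Icc (0:ℝ) 1) := by
    intro Z rz hZ hrz
    rw [Set.disjoint_right]
    rintro z ⟨t, ht, rfl⟩ hzspec
    have hunit := (aux_key_bound A hA γ hΓ hd hZ hrz ht).1
    have h2 := hunit.neg
    rw [neg_sub] at h2
    rw [spectrum.mem_iff, Algebra.algebraMap_eq_smul_one] at hzspec
    exact hzspec h2
  refine ⟨X, ⟨hrmin_eq ▸ hXrm, hdisj X rm hXrm hrmd, hXeq⟩, ?_⟩
  intro r hr1 hr2 Y hYn _ hYfix
  rw [hrmin_eq] at hr1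
  have hrd : r < d := by
    have : rMax A K γ ≤ d := by
      rw [rMax, ← hd_def, ← hV_def]
      have := Real.sqrt_nonneg V
      linarith
    linarith
  have hXr : ‖X‖ ≤ r := le_trans hXrm hr1
  have hVlt : V < (d - r) ^ 2 := by
    rw [rMax, ← hd_def, ← hV_def] at hr2
    nlinarith [Real.sq_sqrt hV0, Real.sqrt_nonneg V, hr2]
  have hr0 : 0 ≤ r := le_trans hrm0 hr1
  have hdr : 0 < d - r := by linarith
  have hq2 : V * ((d - r)⁻¹) ^ 2 < 1 := by
    calc V * ((d - r)⁻¹) ^ 2 < (d - r) ^ 2 * ((d - r)⁻¹) ^ 2 :=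
          mul_lt_mul_of_pos_right hVlt (by positivity)
      _ = 1 := by field_simp
  have hl := aux_Vmap_lip A hA γ hγ hΓ K hK hd hYn hXr hrd
  rw [← hV_def, ← hd_def, ← hYfix, ← hXeq] at hl
  have hnn : 0 ≤ ‖Y - X‖ := norm_nonneg _
  have hq0 : 0 ≤ V * ((d - r)⁻¹) ^ 2 := by positivity
  have hzero : ‖Y - X‖ = 0 := le_antisymm (by nlinarith [hl, hq2, hnn, hq0]) hnn
  rw [← sub_eq_zero]
  exact norm_eq_zero.mp hzero

end
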